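/- arXiv:2403.15906 — 2 statements merged into one kernel-verified Lean document; each statement's English description precedes it below -/
import Mathlib

section
/- Let (M ⇄ N, h) be a filtered contraction with complete filtrations, and let ∂ be a perturbation of the differential on N (lowering filtration, with (d+∂)² = 0). Then the infinite series D = Σ_{n≥0} g∂(h∂)ⁿ∇ converges, D is a perturbation of the differential on M, and the maps ∇_∂ = Σ(h∂)ⁿ∇, g_∂ = Σ g(∂h)ⁿ, h_∂ = Σ(h∂)ⁿh form a filtered contraction between M_D and N_∂. -/
noncomputable def ptLimit {R A B : Type} [CommRing R] [AddCommGroup A] [Module R A]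
    [AddCommGroup B] [Module R B] (f : ℕ → (A →ₗ[R] B))
    (hf : ∀ x : A, ∃ m₀, ∀ m ≥ m₀, f m x = f m₀ x) : A →ₗ[R] B where
  toFun x := f (hf x).choose x
  map_add' x y := by
    have hx := (hf x).choose_spec
    have hy := (hf y).choose_spec
    have hz := (hf (x + y)).choose_spec
    set M := max (hf x).choose (max (hf y).choose (hf (x + y)).choose) with hM
    have h1 : f M (x + y) = f (hf (x+y)).choose (x + y) :=
      hz M (le_max_of_le_right (le_max_right _ _))
    have h2 : f M x = f (hf x).choose x := hx M (le_max_left _ _)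
    have h3 : f M y = f (hf y).choose y := hy M (le_max_of_le_right (le_max_left _ _))
    show f (hf (x + y)).choose (x + y) = f (hf x).choose x + f (hf y).choose y
    rw [← h1, ← h2, ← h3, map_add]
  map_smul' r x := by
    simp only [RingHom.id_apply]
    have hx := (hf x).choose_spec
    have hz := (hf (r • x)).choose_spec
    set M := max (hf x).choose (hf (r • x)).choose with hM
    have h1 : f M (r • x) = f (hf (r • x)).choose (r • x) := hz M (le_max_right _ _)
    have h2 : f M x = f (hf x).choose x := hx M (le_max_left _ _)
    show f (hf (r • x)).choose (r • x) = r • f (hf x).choose x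
    rw [← h1, ← h2, map_smul]

theorem ptLimit_spec {R A B : Type} [CommRing R] [AddCommGroup A] [Module R A]
    [AddCommGroup B] [Module R B] (f : ℕ → (A →ₗ[R] B))
    (hf : ∀ x : A, ∃ m₀, ∀ m ≥ m₀, f m x = f m₀ x) (x : A) :
    ∃ m₀, ∀ m ≥ m₀, f m x = ptLimit f hf x := by
  refine ⟨(hf x).choose, fun m hm => ?_⟩
  exact (hf x).choose_spec m hm

/-- `n`-th term `g ∂ (h ∂)ⁿ ∇` of the series defining the perturbed differential. -/
noncomputable def pertTerm (R : Type) [CommRing R] (M N : Type)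
    [AddCommGroup M] [Module R M] [AddCommGroup N] [Module R N]
    (g : N →ₗ[R] M) (nab : M →ₗ[R] N) (h pert : N →ₗ[R] N) (n : ℕ) : M →ₗ[R] M :=
  g ∘ₗ pert ∘ₗ ((h ∘ₗ pert) ^ n : Module.End R N) ∘ₗ nab

theorem statement1 (R : Type) [CommRing R]
    (M N : Type) [AddCommGroup M] [Module R M] [AddCommGroup N] [Module R N]
    (FM : ℕ → Submodule R M) (FN : ℕ → Submodule R N)
    (hFMmono : Monotone FM) (hFNmono : Monotone FN)
    (hFMexh : ∀ x : M, ∃ n, x ∈ FM n) (hFNexh : ∀ x : N, ∃ n, x ∈ FN n)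
    (dM : M →ₗ[R] M) (dN : N →ₗ[R] N)
    (hdM : dM ∘ₗ dM = 0) (hdN : dN ∘ₗ dN = 0)
    (hdMfil : ∀ n, ∀ x ∈ FM n, dM x ∈ FM n) (hdNfil : ∀ n, ∀ x ∈ FN n, dN x ∈ FN n)
    (g : N →ₗ[R] M) (nab : M →ₗ[R] N) (h : N →ₗ[R] N)
    (hgchain : dM ∘ₗ g = g ∘ₗ dN) (hnabchain : dN ∘ₗ nab = nab ∘ₗ dM)
    (hgfil : ∀ n, ∀ x ∈ FN n, g x ∈ FM n) (hnabfil : ∀ n, ∀ x ∈ FM n, nab x ∈ FN n)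
    (hhfil : ∀ n, ∀ x ∈ FN n, h x ∈ FN n)
    (hretr : g ∘ₗ nab = LinearMap.id)
    (hDh : dN ∘ₗ h + h ∘ₗ dN = nab ∘ₗ g - LinearMap.id)
    (hgh : g ∘ₗ h = 0) (hhnab : h ∘ₗ nab = 0) (hhh : h ∘ₗ h = 0)
    -- the perturbation of the differential of `N`:
    (pert : N →ₗ[R] N)
    (hpert : (dN + pert) ∘ₗ (dN + pert) = 0)
    (hpertlow : ∀ n, ∀ x ∈ FN (n + 1), pert x ∈ FN n)
    (hpert0 : ∀ x ∈ FN 0, pert x = 0) :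
    ∃ (Dp : M →ₗ[R] M) (nabP : M →ₗ[R] N) (gP : N →ₗ[R] M) (hP : N →ₗ[R] N),
      -- convergence of the four series:
      (∀ x : M, ∃ m₀, ∀ m ≥ m₀,
        (∑ n ∈ Finset.range m, pertTerm R M N g nab h pert n) x = Dp x) ∧
      (∀ x : M, ∃ m₀, ∀ m ≥ m₀,
        (∑ n ∈ Finset.range m,
          (((h ∘ₗ pert) ^ n : Module.End R N) ∘ₗ nab)) x = nabP x) ∧
      (∀ x : N, ∃ m₀, ∀ m ≥ m₀,
        (∑ n ∈ Finset.range m,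
          (g ∘ₗ ((pert ∘ₗ h) ^ n : Module.End R N))) x = gP x) ∧
      (∀ x : N, ∃ m₀, ∀ m ≥ m₀,
        (∑ n ∈ Finset.range m,
          (((h ∘ₗ pert) ^ n : Module.End R N) ∘ₗ h)) x = hP x) ∧
      -- `Dp` is a perturbation of the differential of `M`:
      ((dM + Dp) ∘ₗ (dM + Dp) = 0) ∧
      (∀ n, ∀ x ∈ FM (n + 1), Dp x ∈ FM n) ∧ (∀ x ∈ FM 0, Dp x = 0) ∧
      -- the perturbed data form a filtered contraction:
      (gP ∘ₗ nabP = LinearMap.id) ∧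
      ((dN + pert) ∘ₗ hP + hP ∘ₗ (dN + pert) = nabP ∘ₗ gP - LinearMap.id) ∧
      (gP ∘ₗ hP = 0) ∧ (hP ∘ₗ nabP = 0) ∧ (hP ∘ₗ hP = 0) ∧
      ((dM + Dp) ∘ₗ gP = gP ∘ₗ (dN + pert)) ∧
      ((dN + pert) ∘ₗ nabP = nabP ∘ₗ (dM + Dp)) ∧
      (∀ n, ∀ x ∈ FN n, gP x ∈ FM n) ∧ (∀ n, ∀ x ∈ FM n, nabP x ∈ FN n) ∧
      (∀ n, ∀ x ∈ FN n, hP x ∈ FN n) := by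
  classical
  -- pointwise forms of the hypotheses
  have retr : ∀ y : M, g (nab y) = y := fun y => by
    have := LinearMap.ext_iff.mp hretr y; simpa using this
  have gh0 : ∀ y : N, g (h y) = 0 := fun y => by
    have := LinearMap.ext_iff.mp hgh y; simpa using this
  have hnab0 : ∀ y : M, h (nab y) = 0 := fun y => by
    have := LinearMap.ext_iff.mp hhnab y; simpa using this
  have hh0 : ∀ y : N, h (h y) = 0 := fun y => by
    have := LinearMap.ext_iff.mp hhh y; simpa using this
  have gchain : ∀ y : N, dM (g y) = g (dN y) := fun y => by
    have := LinearMap.ext_iff.mp hgchain y; simpa using this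
  have nabchain : ∀ y : M, dN (nab y) = nab (dM y) := fun y => by
    have := LinearMap.ext_iff.mp hnabchain y; simpa using this
  have dh : ∀ y : N, dN (h y) + h (dN y) = nab (g y) - y := fun y => by
    have := LinearMap.ext_iff.mp hDh y; simpa using this
  have ddN : ∀ y : N, dN (dN y) = 0 := fun y => by
    have := LinearMap.ext_iff.mp hdN y; simpa using this
  have dd' : ∀ y : N, dN (dN y + pert y) + pert (dN y + pert y) = 0 := fun y => by
    have := LinearMap.ext_iff.mp hpert y; simpa using this
  have perteq : ∀ y : N, dN (pert y) = - pert (dN y) - pert (pert y) := by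
    intro y
    have h1 := dd' y
    rw [map_add, map_add, ddN y, zero_add] at h1
    -- h1 : dN (pert y) + (pert (dN y) + pert (pert y)) = 0
    have h2 := eq_neg_of_add_eq_zero_left h1
    rw [h2]; abel
  -- the two basic endomorphisms
  set A : Module.End R N := h ∘ₗ pert with hA
  set B : Module.End R N := pert ∘ₗ h with hB
  have powsucc : ∀ (C : Module.End R N) (n : ℕ) (y : N), (C^(n+1)) y = (C^n) (C y) :=
    fun C n y => by rw [pow_succ]; rfl
  have powsucc' : ∀ (C : Module.End R N) (n : ℕ) (y : N), (C^(n+1)) y = C ((C^n) y) :=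
    fun C n y => by rw [pow_succ']; rfl
  -- filtration properties
  have pertfil : ∀ k, ∀ y ∈ FN k, pert y ∈ FN k := by
    intro k y hy
    cases k with
    | zero => rw [hpert0 y hy]; exact (FN 0).zero_mem
    | succ k => exact hFNmono (Nat.le_succ k) (hpertlow k y hy)
  have Afil : ∀ k, ∀ y ∈ FN k, A y ∈ FN k := fun k y hy => hhfil k _ (pertfil k y hy)
  have Apowfil : ∀ (n k : ℕ) (y : N), y ∈ FN k → (A^n) y ∈ FN k := by
    intro n
    induction n with
    | zero => intro k y hy; simpa using hy
    | succ n ih => intro k y hy; rw [powsucc]; exact ih k _ (Afil k y hy)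
  have Bfil : ∀ k, ∀ y ∈ FN k, B y ∈ FN k := fun k y hy => pertfil k _ (hhfil k y hy)
  have Bpowfil : ∀ (n k : ℕ) (y : N), y ∈ FN k → (B^n) y ∈ FN k := by
    intro n
    induction n with
    | zero => intro k y hy; simpa using hy
    | succ n ih => intro k y hy; rw [powsucc]; exact ih k _ (Bfil k y hy)
  have Alow : ∀ k, ∀ y ∈ FN (k+1), A y ∈ FN k := fun k y hy => hhfil k _ (hpertlow k y hy)
  have Blow : ∀ k, ∀ y ∈ FN (k+1), B y ∈ FN k := fun k y hy => hpertlow k _ (hhfil _ y hy)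
  have A0 : ∀ y ∈ FN 0, A y = 0 := fun y hy => by
    show h (pert y) = 0; rw [hpert0 y hy, map_zero]
  have B0 : ∀ y ∈ FN 0, B y = 0 := fun y hy => by
    show pert (h y) = 0; exact hpert0 _ (hhfil 0 y hy)
  have Akill1 : ∀ k, ∀ y ∈ FN k, (A^(k+1)) y = 0 := by
    intro k
    induction k with
    | zero => intro y hy; rw [pow_one]; exact A0 y hy
    | succ k ih => intro y hy; rw [powsucc]; exact ih (A y) (Alow k y hy)
  have Bkill1 : ∀ k, ∀ y ∈ FN k, (B^(k+1)) y = 0 := by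
    intro k
    induction k with
    | zero => intro y hy; rw [pow_one]; exact B0 y hy
    | succ k ih => intro y hy; rw [powsucc]; exact ih (B y) (Blow k y hy)
  have Akill : ∀ k, ∀ y ∈ FN k, ∀ n, k + 1 ≤ n → (A^n) y = 0 := by
    intro k y hy n hn
    obtain ⟨r, rfl⟩ : ∃ r, n = r + (k+1) := ⟨n - (k+1), by omega⟩
    rw [pow_add, Module.End.mul_apply, Akill1 k y hy, map_zero]
  have Bkill : ∀ k, ∀ y ∈ FN k, ∀ n, k + 1 ≤ n → (B^n) y = 0 := by
    intro k y hy n hn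
    obtain ⟨r, rfl⟩ : ∃ r, n = r + (k+1) := ⟨n - (k+1), by omega⟩
    rw [pow_add, Module.End.mul_apply, Bkill1 k y hy, map_zero]
  -- partial sums
  set P : ℕ → Module.End R N := fun m => ∑ n ∈ Finset.range m, A ^ n with hPdef
  set Q : ℕ → Module.End R N := fun m => ∑ n ∈ Finset.range m, B ^ n with hQdef
  have Papp : ∀ (m : ℕ) (y : N), P m y = ∑ n ∈ Finset.range m, (A ^ n) y := by
    intro m y; rw [hPdef]; simp [LinearMap.sum_apply]
  have Qapp : ∀ (m : ℕ) (y : N), Q m y = ∑ n ∈ Finset.range m, (B ^ n) y := by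
    intro m y; rw [hQdef]; simp [LinearMap.sum_apply]
  have Pstab : ∀ y : N, ∃ m₀, ∀ m ≥ m₀, P m y = P m₀ y := by
    intro y
    obtain ⟨k, hk⟩ := hFNexh y
    refine ⟨k + 1, fun m hm => ?_⟩
    rw [Papp, Papp]
    refine (Finset.sum_subset (Finset.range_subset_range.mpr hm) (fun n hn hn' => ?_)).symm
    refine Akill k y hk n ?_
    simp only [Finset.mem_range] at hn'
    omega
  have Qstab : ∀ y : N, ∃ m₀, ∀ m ≥ m₀, Q m y = Q m₀ y := by
    intro y
    obtain ⟨k, hk⟩ := hFNexh y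
    refine ⟨k + 1, fun m hm => ?_⟩
    rw [Qapp, Qapp]
    refine (Finset.sum_subset (Finset.range_subset_range.mpr hm) (fun n hn hn' => ?_)).symm
    refine Bkill k y hk n ?_
    simp only [Finset.mem_range] at hn'
    omega
  set S : Module.End R N := ptLimit P Pstab with hSdef
  set T : Module.End R N := ptLimit Q Qstab with hTdef
  have Sspec : ∀ y : N, ∃ m₀, ∀ m ≥ m₀, P m y = S y := fun y => ptLimit_spec P Pstab y
  have Tspec : ∀ y : N, ∃ m₀, ∀ m ≥ m₀, Q m y = T y := fun y => ptLimit_spec Q Qstab y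
  have Pfil : ∀ (m k : ℕ) (y : N), y ∈ FN k → P m y ∈ FN k := by
    intro m k y hy; rw [Papp]; exact Submodule.sum_mem _ (fun n _ => Apowfil n k y hy)
  have Qfil : ∀ (m k : ℕ) (y : N), y ∈ FN k → Q m y ∈ FN k := by
    intro m k y hy; rw [Qapp]; exact Submodule.sum_mem _ (fun n _ => Bpowfil n k y hy)
  have Sfil : ∀ (k : ℕ) (y : N), y ∈ FN k → S y ∈ FN k := by
    intro k y hy
    obtain ⟨m₀, hm₀⟩ := Sspec y
    rw [← hm₀ m₀ le_rfl]; exact Pfil m₀ k y hy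
  have Tfil : ∀ (k : ℕ) (y : N), y ∈ FN k → T y ∈ FN k := by
    intro k y hy
    obtain ⟨m₀, hm₀⟩ := Tspec y
    rw [← hm₀ m₀ le_rfl]; exact Qfil m₀ k y hy
  -- commutation of powers
  have commA : ∀ (n : ℕ) (y : N), pert ((A^n) y) = (B^n) (pert y) := by
    intro n
    induction n with
    | zero => intro y; simp
    | succ n ih =>
      intro y
      rw [powsucc A n y, ih (A y), powsucc B n (pert y)]
      rfl
  have commH : ∀ (n : ℕ) (y : N), (A^n) (h y) = h ((B^n) y) := by
    intro n
    induction n with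
    | zero => intro y; simp
    | succ n ih =>
      intro y
      rw [powsucc A n (h y)]
      have e : A (h y) = h (B y) := rfl
      rw [e, ih (B y), ← powsucc B n y]
  -- vanishing compositions
  have gA : ∀ (n : ℕ) (y : N), 1 ≤ n → g ((A^n) y) = 0 := by
    intro n y hn
    obtain ⟨k, rfl⟩ : ∃ k, n = k + 1 := ⟨n - 1, by omega⟩
    rw [powsucc' A k y]
    exact gh0 _
  have hA : ∀ (n : ℕ) (y : N), 1 ≤ n → h ((A^n) y) = 0 := by
    intro n y hn
    obtain ⟨k, rfl⟩ : ∃ k, n = k + 1 := ⟨n - 1, by omega⟩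
    rw [powsucc' A k y]
    exact hh0 _
  have Bnab : ∀ (n : ℕ) (y : M), 1 ≤ n → (B^n) (nab y) = 0 := by
    intro n y hn
    obtain ⟨k, rfl⟩ : ∃ k, n = k + 1 := ⟨n - 1, by omega⟩
    rw [powsucc B k (nab y)]
    have e : B (nab y) = 0 := by show pert (h (nab y)) = 0; rw [hnab0, map_zero]
    rw [e, map_zero]
  have Bh : ∀ (n : ℕ) (y : N), 1 ≤ n → (B^n) (h y) = 0 := by
    intro n y hn
    obtain ⟨k, rfl⟩ : ∃ k, n = k + 1 := ⟨n - 1, by omega⟩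
    rw [powsucc B k (h y)]
    have e : B (h y) = 0 := by show pert (h (h y)) = 0; rw [hh0, map_zero]
    rw [e, map_zero]
  -- recursion identities for partial sums
  have Psucc1 : ∀ (m : ℕ) (y : N), P (m+1) y = y + h (pert (P m y)) := by
    intro m y
    rw [Papp, Finset.sum_range_succ']
    simp only [powsucc' A]
    rw [← map_sum, ← Papp]
    have e0 : ((A ^ 0 : Module.End R N)) y = y := by simp
    rw [e0, add_comm]
    rfl
  have Psucc2 : ∀ (m : ℕ) (y : N), P (m+1) y = y + P m (h (pert y)) := by
    intro m y
    rw [Papp, Finset.sum_range_succ']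
    simp only [powsucc A]
    rw [← Papp]
    have e0 : ((A ^ 0 : Module.End R N)) y = y := by simp
    rw [e0, add_comm]
    rfl
  have Qsucc1 : ∀ (m : ℕ) (y : N), Q (m+1) y = y + pert (h (Q m y)) := by
    intro m y
    rw [Qapp, Finset.sum_range_succ']
    simp only [powsucc' B]
    rw [← map_sum, ← Qapp]
    have e0 : ((B ^ 0 : Module.End R N)) y = y := by simp
    rw [e0, add_comm]
    rfl
  have Qsucc2 : ∀ (m : ℕ) (y : N), Q (m+1) y = y + Q m (pert (h y)) := by
    intro m y
    rw [Qapp, Finset.sum_range_succ']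
    simp only [powsucc B]
    rw [← Qapp]
    have e0 : ((B ^ 0 : Module.End R N)) y = y := by simp
    rw [e0, add_comm]
    rfl
  -- recursion identities for the limits
  have Srec1 : ∀ y : N, S y = y + h (pert (S y)) := by
    intro y
    obtain ⟨m₀, hm₀⟩ := Sspec y
    have h1 : P (m₀ + 1) y = S y := hm₀ (m₀+1) (Nat.le_succ _)
    have h2 : P m₀ y = S y := hm₀ m₀ le_rfl
    conv_lhs => rw [← h1, Psucc1, h2]
  have Srec2 : ∀ y : N, S y = y + S (h (pert y)) := by
    intro y
    obtain ⟨m₁, hm₁⟩ := Sspec y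
    obtain ⟨m₂, hm₂⟩ := Sspec (h (pert y))
    have h1 : P (max m₁ m₂ + 1) y = S y := hm₁ _ (le_trans (le_max_left _ _) (Nat.le_succ _))
    have h2 : P (max m₁ m₂) (h (pert y)) = S (h (pert y)) := hm₂ _ (le_max_right _ _)
    rw [← h1, Psucc2, h2]
  have Trec1 : ∀ y : N, T y = y + pert (h (T y)) := by
    intro y
    obtain ⟨m₀, hm₀⟩ := Tspec y
    have h1 : Q (m₀ + 1) y = T y := hm₀ (m₀+1) (Nat.le_succ _)
    have h2 : Q m₀ y = T y := hm₀ m₀ le_rfl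
    conv_lhs => rw [← h1, Qsucc1, h2]
  have Trec2 : ∀ y : N, T y = y + T (pert (h y)) := by
    intro y
    obtain ⟨m₁, hm₁⟩ := Tspec y
    obtain ⟨m₂, hm₂⟩ := Tspec (pert (h y))
    have h1 : Q (max m₁ m₂ + 1) y = T y := hm₁ _ (le_trans (le_max_left _ _) (Nat.le_succ _))
    have h2 : Q (max m₁ m₂) (pert (h y)) = T (pert (h y)) := hm₂ _ (le_max_right _ _)
    rw [← h1, Qsucc2, h2]
  -- rearranged forms
  have AS : ∀ y : N, h (pert (S y)) = S y - y := by
    intro y; conv_rhs => rw [Srec1 y]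
    abel
  have SA : ∀ y : N, S (h (pert y)) = S y - y := by
    intro y; conv_rhs => rw [Srec2 y]
    abel
  have BT : ∀ y : N, pert (h (T y)) = T y - y := by
    intro y; conv_rhs => rw [Trec1 y]
    abel
  have TB : ∀ y : N, T (pert (h y)) = T y - y := by
    intro y; conv_rhs => rw [Trec2 y]
    abel
  have Sinv1 : ∀ y : N, S y - h (pert (S y)) = y := by
    intro y; rw [AS y]; abel
  have Sinv2 : ∀ y : N, S (y - h (pert y)) = y := by
    intro y; rw [map_sub, SA y]; abel
  have Tinv1 : ∀ y : N, T y - pert (h (T y)) = y := by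
    intro y; rw [BT y]; abel
  have Tinv2 : ∀ y : N, T (y - pert (h y)) = y := by
    intro y; rw [map_sub, TB y]; abel
  -- absorption identities
  have gS : ∀ y : N, g (S y) = g y := by
    intro y
    obtain ⟨m₀, hm₀⟩ := Sspec y
    rw [← hm₀ (max m₀ 1) (le_max_left _ _), Papp, map_sum]
    rw [Finset.sum_eq_single 0]
    · simp
    · intro n hn h0; exact gA n y (by omega)
    · intro habs; exfalso; simp only [Finset.mem_range] at habs; omega
  have hS : ∀ y : N, h (S y) = h y := by
    intro y
    obtain ⟨m₀, hm₀⟩ := Sspec y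
    rw [← hm₀ (max m₀ 1) (le_max_left _ _), Papp, map_sum]
    rw [Finset.sum_eq_single 0]
    · simp
    · intro n hn h0; exact hA n y (by omega)
    · intro habs; exfalso; simp only [Finset.mem_range] at habs; omega
  have Tnab : ∀ y : M, T (nab y) = nab y := by
    intro y
    obtain ⟨m₀, hm₀⟩ := Tspec (nab y)
    rw [← hm₀ (max m₀ 1) (le_max_left _ _), Qapp]
    rw [Finset.sum_eq_single 0]
    · simp
    · intro n hn h0; exact Bnab n y (by omega)
    · intro habs; exfalso; simp only [Finset.mem_range] at habs; omega
  have Th : ∀ y : N, T (h y) = h y := by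
    intro y
    obtain ⟨m₀, hm₀⟩ := Tspec (h y)
    rw [← hm₀ (max m₀ 1) (le_max_left _ _), Qapp]
    rw [Finset.sum_eq_single 0]
    · simp
    · intro n hn h0; exact Bh n y (by omega)
    · intro habs; exfalso; simp only [Finset.mem_range] at habs; omega
  -- intertwining identities
  have pS : ∀ y : N, pert (S y) = T (pert y) := by
    intro y
    obtain ⟨m₁, hm₁⟩ := Sspec y
    obtain ⟨m₂, hm₂⟩ := Tspec (pert y)
    rw [← hm₁ (max m₁ m₂) (le_max_left _ _), ← hm₂ (max m₁ m₂) (le_max_right _ _),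
      Papp, Qapp, map_sum]
    exact Finset.sum_congr rfl (fun n _ => commA n y)
  have ShT : ∀ y : N, S (h y) = h (T y) := by
    intro y
    obtain ⟨m₁, hm₁⟩ := Sspec (h y)
    obtain ⟨m₂, hm₂⟩ := Tspec y
    rw [← hm₁ (max m₁ m₂) (le_max_left _ _), ← hm₂ (max m₁ m₂) (le_max_right _ _),
      Papp, Qapp, map_sum]
    exact Finset.sum_congr rfl (fun n _ => commH n y)
  have TS : ∀ y : N, T (S y) = S y + T y - y := by
    intro y
    have h1 : T (S y) = S y + T (pert (h (S y))) := Trec2 (S y)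
    have h2 : pert (h (S y)) = pert (h y) := by rw [hS y]
    rw [h1, h2, TB y]
    abel
  -- the star identities
  have star1 : ∀ y : N, (dN y + pert y) - h (pert (dN y + pert y))
      = dN (y - h (pert y)) + nab (g (pert y)) := by
    intro y
    simp only [map_add, map_sub]
    have e3 : pert (dN y) = -dN (pert y) - pert (pert y) := by rw [perteq y]; abel
    rw [e3]
    simp only [map_sub, map_neg]
    have e4 : h (dN (pert y)) = nab (g (pert y)) - pert y - dN (h (pert y)) := by
      rw [← dh (pert y)]; abel
    rw [e4]
    abel
  have star2 : ∀ y : N, dN (y - pert (h y)) + pert (y - pert (h y))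
      = (dN y - pert (h (dN y))) + pert (nab (g y)) := by
    intro y
    simp only [map_sub]
    rw [perteq (h y)]
    have e2 : dN (h y) = nab (g y) - y - h (dN y) := by rw [← dh y]; abel
    rw [e2]
    simp only [map_sub, map_neg, map_add]
    abel
  -- perturbed differential conjugation identities
  have d'S : ∀ z : N, dN (S z) + pert (S z) = S (dN z) + S (nab (g (pert (S z)))) := by
    intro z
    have hu := star1 (S z)
    rw [Sinv1 z] at hu
    have h2 := congrArg S hu
    rw [Sinv2 (dN (S z) + pert (S z))] at h2
    rw [h2, map_add]
  have Td' : ∀ z : N, T (dN z + pert z) = dN (T z) + T (pert (nab (g (T z)))) := by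
    intro z
    have hu := star2 (T z)
    rw [Tinv1 z] at hu
    rw [hu, map_add, Tinv2 (dN (T z))]
  have dNT : ∀ z : N, dN (T z) = T (dN z) + T (pert z) - T (pert (nab (g (T z)))) := by
    intro z
    have e := Td' z
    rw [map_add] at e
    rw [e]
    abel
  have gdA : ∀ w : N, g (dN (h w)) = 0 := by
    intro w
    have e' : dN (h w) = nab (g w) - w - h (dN w) := by rw [← dh w]; abel
    rw [e', map_sub, map_sub, retr (g w), gh0 (dN w)]
    abel
  have gdS : ∀ z : N, g (dN (S z)) = g (dN z) := by
    intro z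
    conv_lhs => rw [Srec1 z]
    rw [map_add, map_add, gdA (pert (S z)), add_zero]
  -- key chain identities
  have key_a : ∀ x : M, dN (S (nab x)) + pert (S (nab x))
      = S (nab (dM x + g (pert (S (nab x))))) := by
    intro x
    have hu := star1 (S (nab x))
    rw [Sinv1 (nab x)] at hu
    rw [nabchain x] at hu
    have h2 := congrArg S hu
    rw [Sinv2 (dN (S (nab x)) + pert (S (nab x)))] at h2
    rw [map_add nab (dM x) (g (pert (S (nab x))))]
    rw [h2, map_add]
  have key_b : ∀ x : N, dM (g (T x)) + g (pert (S (nab (g (T x)))))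
      = g (T (dN x + pert x)) := by
    intro x
    rw [Td' x, map_add]
    rw [← gchain (T x)]
    rw [← pS (nab (g (T x)))]
  have dM'eq : ∀ x : M, dM x + g (pert (S (nab x)))
      = g (dN (S (nab x)) + pert (S (nab x))) := by
    intro x
    rw [map_add, gdS (nab x), nabchain x, retr (dM x)]
  -- assemble the answer
  refine ⟨g ∘ₗ (pert ∘ₗ (S ∘ₗ nab)), S ∘ₗ nab, g ∘ₗ T, S ∘ₗ h,
    ?_, ?_, ?_, ?_, ?_, ?_, ?_, ?_, ?_, ?_, ?_, ?_, ?_, ?_, ?_, ?_, ?_⟩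
  · -- convergence of the series for Dp
    intro x
    obtain ⟨m₀, hm₀⟩ := Sspec (nab x)
    refine ⟨m₀, fun m hm => ?_⟩
    have e : (∑ n ∈ Finset.range m, pertTerm R M N g nab h pert n) x
        = g (pert (P m (nab x))) := by
      rw [Papp, map_sum, map_sum]
      simp [pertTerm, LinearMap.sum_apply]
      rfl
    rw [e, hm₀ m hm]
    rfl
  · -- convergence of the series for nabP
    intro x
    obtain ⟨m₀, hm₀⟩ := Sspec (nab x)
    refine ⟨m₀, fun m hm => ?_⟩
    have e : (∑ n ∈ Finset.range m, ((A ^ n : Module.End R N) ∘ₗ nab)) x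
        = P m (nab x) := by
      rw [Papp]
      simp [LinearMap.sum_apply]
    rw [e, hm₀ m hm]
    rfl
  · -- convergence of the series for gP
    intro x
    obtain ⟨m₀, hm₀⟩ := Tspec x
    refine ⟨m₀, fun m hm => ?_⟩
    have e : (∑ n ∈ Finset.range m, (g ∘ₗ (B ^ n : Module.End R N))) x
        = g (Q m x) := by
      rw [Qapp, map_sum]
      simp [LinearMap.sum_apply]
    rw [e, hm₀ m hm]
    rfl
  · -- convergence of the series for hP
    intro x
    obtain ⟨m₀, hm₀⟩ := Sspec (h x)
    refine ⟨m₀, fun m hm => ?_⟩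
    have e : (∑ n ∈ Finset.range m, ((A ^ n : Module.End R N) ∘ₗ h)) x
        = P m (h x) := by
      rw [Papp]
      simp [LinearMap.sum_apply]
    rw [e, hm₀ m hm]
    rfl
  · -- Dp is a perturbation: square zero
    apply LinearMap.ext
    intro x
    simp only [LinearMap.comp_apply, LinearMap.add_apply, LinearMap.zero_apply]
    show dM (dM x + g (pert (S (nab x))))
        + g (pert (S (nab (dM x + g (pert (S (nab x))))))) = 0
    rw [dM'eq (dM x + g (pert (S (nab x))))]
    rw [← key_a x]
    rw [dd' (S (nab x)), map_zero]
  · -- Dp lowers the filtration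
    intro n x hx
    exact hgfil n _ (hpertlow n _ (Sfil (n+1) _ (hnabfil (n+1) x hx)))
  · -- Dp kills FM 0
    intro x hx
    show g (pert (S (nab x))) = 0
    rw [hpert0 _ (Sfil 0 _ (hnabfil 0 x hx)), map_zero]
  · -- gP ∘ nabP = id
    apply LinearMap.ext
    intro x
    simp only [LinearMap.comp_apply, LinearMap.id_apply]
    rw [TS (nab x), map_sub, map_add, gS (nab x), Tnab x, retr x]
    abel
  · -- the homotopy identity
    apply LinearMap.ext
    intro x
    simp only [LinearMap.comp_apply, LinearMap.add_apply, LinearMap.sub_apply,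
      LinearMap.id_apply]
    show dN (S (h x)) + pert (S (h x)) + S (h (dN x + pert x))
        = S (nab (g (T x))) - x
    rw [ShT (dN x + pert x), Td' x, map_add h, dNT x, ← pS (nab (g (T x))), ← pS x]
    rw [d'S (h x), pS (h x), TB x]
    rw [eq_sub_of_add_eq (dh x)]
    simp only [map_add, map_sub]
    rw [ShT (dN x)]
    rw [AS x, AS (nab (g (T x)))]
    abel
  · -- gP ∘ hP = 0
    apply LinearMap.ext
    intro x
    simp only [LinearMap.comp_apply, LinearMap.zero_apply]
    rw [TS (h x), map_sub, map_add, gS (h x), Th x, gh0 x]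
    simp
  · -- hP ∘ nabP = 0
    apply LinearMap.ext
    intro x
    simp only [LinearMap.comp_apply, LinearMap.zero_apply]
    rw [hS (nab x), hnab0 x, map_zero]
  · -- hP ∘ hP = 0
    apply LinearMap.ext
    intro x
    simp only [LinearMap.comp_apply, LinearMap.zero_apply]
    rw [hS (h x), hh0 x, map_zero]
  · -- perturbed g is a chain map
    apply LinearMap.ext
    intro x
    simp only [LinearMap.comp_apply, LinearMap.add_apply]
    exact key_b x
  · -- perturbed nab is a chain map
    apply LinearMap.ext
    intro x
    simp only [LinearMap.comp_apply, LinearMap.add_apply]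
    exact key_a x
  · -- gP preserves filtration
    intro n x hx
    exact hgfil n _ (Tfil n x hx)
  · -- nabP preserves filtration
    intro n x hx
    simp only [LinearMap.comp_apply]
    exact Sfil n _ (hnabfil n x hx)
  · -- hP preserves filtration
    intro n x hx
    simp only [LinearMap.comp_apply]
    exact Sfil n _ (hhfil n x hx)
end

section
/- For a small category C and a group G, the assignment to a functor F : C → G of the induced simplicial principal G-bundle N(𝒫_{C,F}) → N(C) induces an injection from D(C,G) = Funct(C,G)/Map(Ob_C, G) into the set of isomorphism classes of simplicial principal G-bundles on N(C); two functors F₁, F₂ yield isomorphic bundles if and only if they are related by a natural transformation given by a map Φ : Ob_C → G (i.e. F₂(f) = Φ(x)F₁(f)Φ(y)⁻¹ for f : x → y). -/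
open CategoryTheory Simplicial

variable (C : Type) [Category C] (G : Type) [Group G]

/-- A functor from `C` to the group `G` (viewed as a one-object groupoid). -/
structure GFunctor where
  map : ∀ {x y : C}, (x ⟶ y) → G
  map_comp : ∀ {x y z : C} (f : x ⟶ y) (g : y ⟶ z), map (f ≫ g) = map f * map g
  map_id : ∀ x : C, map (𝟙 x) = 1

variable {C G}

/-- The twisting function `ρ ∘ NF : N(C) → G` induced by a functor
`F : C → G`: it sends a `(p+1)`-simplex to the value of `F` on its last
arrow. -/
def rhoF (F : GFunctor C G) (p : ℕ) (b : nerve C _⦋p + 1⦌) : G :=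
  F.map ((b : CategoryTheory.ComposableArrows C (p + 1)).map' p (p + 1))

/-- Faces of the twisted cartesian product `N(C) ×_{ρ∘NF} G`
(equivalently, of the pullback bundle `N(𝒫_{C,F})`): the last face is
twisted by `ρ ∘ NF`; `G` is trivially simplicial. -/
def dE (F : GFunctor C G) (p : ℕ) (j : Fin (p + 2))
    (z : nerve C _⦋p + 1⦌ × G) : nerve C _⦋p⦌ × G :=
  ((nerve C).δ j z.1, if (j : ℕ) = p + 1 then rhoF F p z.1 * z.2 else z.2)

/-- Degeneracies of `N(C) ×_{ρ∘NF} G`. -/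
def sE (p : ℕ) (j : Fin (p + 1)) (z : nerve C _⦋p⦌ × G) :
    nerve C _⦋p + 1⦌ × G :=
  ((nerve C).σ j z.1, z.2)

/-- An isomorphism of simplicial principal `G`-bundles over the identity of
`N(C)` between the bundles induced by the functors `F₁` and `F₂`. -/
def IsPBIso (F₁ F₂ : GFunctor C G)
    (Ψ : ∀ p : ℕ, nerve C _⦋p⦌ × G → nerve C _⦋p⦌ × G) : Prop :=
  (∀ (p : ℕ) (z : nerve C _⦋p⦌ × G), (Ψ p z).1 = z.1) ∧
  (∀ (p : ℕ) (z : nerve C _⦋p⦌ × G) (g : G),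
    Ψ p (z.1, z.2 * g) = ((Ψ p z).1, (Ψ p z).2 * g)) ∧
  (∀ (p : ℕ) (j : Fin (p + 2)) (z : nerve C _⦋p + 1⦌ × G),
    Ψ p (dE F₁ p j z) = dE F₂ p j (Ψ (p + 1) z)) ∧
  (∀ (p : ℕ) (j : Fin (p + 1)) (z : nerve C _⦋p⦌ × G),
    Ψ (p + 1) (sE p j z) = sE p j (Ψ p z)) ∧
  (∀ p : ℕ, Function.Bijective (Ψ p))

/-!
STATEMENT 18: two functors `F₁, F₂ : C → G` yield isomorphic simplicial
principal `G`-bundles on `N(C)` if and only if they are related by a natural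
transformation given by a map `Φ : Ob C → G`, i.e.
`F₂(f) = Φ(x) F₁(f) Φ(y)⁻¹` for `f : x ⟶ y`.  (Hence `F ↦ N(𝒫_{C,F})`
induces an injection of `D(C,G) = Funct(C,G)/Map(Ob C, G)` into the set of
isomorphism classes of simplicial principal `G`-bundles on `N(C)`.)
-/

private lemma nerve_δ_obj {p : ℕ} (j : Fin (p + 2)) (b : nerve C _⦋p + 1⦌)
    (i : Fin (p + 1)) :
    (((nerve C).δ j b : nerve C _⦋p⦌) : CategoryTheory.ComposableArrows C p).obj i
      = (b : CategoryTheory.ComposableArrows C (p + 1)).obj (j.succAbove i) := rfl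

private lemma nerve_σ_obj {p : ℕ} (j : Fin (p + 1)) (b : nerve C _⦋p⦌)
    (i : Fin (p + 2)) :
    (((nerve C).σ j b : nerve C _⦋p+1⦌) : CategoryTheory.ComposableArrows C (p+1)).obj i
      = (b : CategoryTheory.ComposableArrows C p).obj (j.predAbove i) := rfl

private lemma rho_mk₁ (F : GFunctor C G) {x y : C} (f : x ⟶ y) :
    rhoF F 0 (CategoryTheory.ComposableArrows.mk₁ f : nerve C _⦋1⦌) = F.map f := rfl

private lemma δ₀_mk₁ {x y : C} (f : x ⟶ y) :
    (nerve C).δ (0 : Fin 2) (CategoryTheory.ComposableArrows.mk₁ f : nerve C _⦋1⦌)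
      = (CategoryTheory.ComposableArrows.mk₀ y : nerve C _⦋0⦌) :=
  CategoryTheory.ComposableArrows.ext₀ rfl

private lemma δ₁_mk₁ {x y : C} (f : x ⟶ y) :
    (nerve C).δ (1 : Fin 2) (CategoryTheory.ComposableArrows.mk₁ f : nerve C _⦋1⦌)
      = (CategoryTheory.ComposableArrows.mk₀ x : nerve C _⦋0⦌) :=
  CategoryTheory.ComposableArrows.ext₀ rfl

theorem statement18 (F₁ F₂ : GFunctor C G) :
    (∃ Ψ, IsPBIso F₁ F₂ Ψ) ↔
    (∃ Φ : C → G, ∀ (x y : C) (f : x ⟶ y),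
      F₂.map f = Φ x * F₁.map f * (Φ y)⁻¹) := by
  constructor
  · rintro ⟨Ψ, hover, hequiv, hface, -, -⟩
    set φ : ∀ p, nerve C _⦋p⦌ → G := fun p b => (Ψ p (b, 1)).2 with hφ
    have hΨ : ∀ p (z : nerve C _⦋p⦌ × G), Ψ p z = (z.1, φ p z.1 * z.2) := by
      intro p z
      obtain ⟨b, g⟩ := z
      calc Ψ p (b, g) = Ψ p (b, 1 * g) := by rw [one_mul]
      _ = ((Ψ p (b, 1)).1, (Ψ p (b, 1)).2 * g) := hequiv p (b, 1) g
      _ = (b, φ p b * g) := by rw [hover p (b, 1)]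
    refine ⟨fun x => φ 0 (CategoryTheory.ComposableArrows.mk₀ x), fun x y f => ?_⟩
    have h0 := hface 0 0 ((CategoryTheory.ComposableArrows.mk₁ f : nerve C _⦋1⦌), 1)
    have h1 := hface 0 1 ((CategoryTheory.ComposableArrows.mk₁ f : nerve C _⦋1⦌), 1)
    simp only [dE, hΨ, Fin.val_zero, Fin.val_one, if_neg (by norm_num : ¬ (0:ℕ) = 0 + 1),
      zero_add, if_true, mul_one, one_mul, rho_mk₁, δ₀_mk₁, δ₁_mk₁, Prod.mk.injEq,
      eq_self_iff_true, ite_true] at h0 h1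
    obtain ⟨-, h0⟩ := Prod.mk.inj h0
    obtain ⟨-, h1⟩ := Prod.mk.inj h1
    rw [← h0] at h1
    rw [eq_comm, mul_inv_eq_iff_eq_mul]
    exact h1
  · rintro ⟨Φ, hΦ⟩
    refine ⟨fun p z => (z.1,
      Φ ((z.1 : CategoryTheory.ComposableArrows C p).obj (Fin.last p)) * z.2),
      fun p z => rfl, fun p z g => by simp [mul_assoc], ?_, ?_, ?_⟩
    · intro p j z
      by_cases hj : (j : ℕ) = p + 1
      · have hj' : j = Fin.last (p + 1) := Fin.ext (by simpa using hj)
        subst hj'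
        simp only [dE, if_pos hj, Prod.mk.injEq, true_and]
        rw [nerve_δ_obj, Fin.succAbove_last_apply]
        have hr : rhoF F₂ p z.1
            = Φ ((z.1 : CategoryTheory.ComposableArrows C (p+1)).obj (Fin.castSucc (Fin.last p)))
              * rhoF F₁ p z.1
              * (Φ ((z.1 : CategoryTheory.ComposableArrows C (p+1)).obj (Fin.last (p+1))))⁻¹ :=
          hΦ _ _ _
        rw [hr]
        group
      · simp only [dE, if_neg hj, Prod.mk.injEq, true_and]
        have hle : j ≤ Fin.castSucc (Fin.last p) := by
          rw [Fin.le_def]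
          simp only [Fin.castSucc, Fin.val_last, Fin.castAdd, Fin.castLE]
          omega
        rw [nerve_δ_obj, Fin.succAbove_of_le_castSucc _ _ hle, Fin.succ_last]
    · intro p j z
      simp only [sE, Prod.mk.injEq, true_and]
      rw [nerve_σ_obj]
      congr 1
      rw [Fin.predAbove_right_last]
    · intro p
      refine Function.bijective_iff_has_inverse.mpr
        ⟨fun z => (z.1,
          (Φ ((z.1 : CategoryTheory.ComposableArrows C p).obj (Fin.last p)))⁻¹ * z.2),
         fun z => ?_, fun z => ?_⟩ <;> obtain ⟨b, g⟩ := z <;> simp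
end
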